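/- Let E, F be finite sets, H : E × F → ℝ a matrix inducing an injective map on signed measures in both variables (i.e. H and its transpose have trivial kernels as linear maps). Let P and Q be stochastic matrices on E and F with reversible probability measures μ and ν (µ(x)P(x,y) = µ(y)P(y,x) and similarly for Q, ν), with μ, ν strictly positive, and suppose P H = H Qᵀ. Then P, viewed as a self-adjoint operator on ℝ^E with inner product ⟨f,g⟩_μ = ∑ μ(x) f(x) g(x), and Q on ℝ^F with ⟨·,·⟩_ν, have the same eigenvalues with the same multiplicities. -/

import Mathlib

open Finset

lemma charpoly_transpose' {n R : Type*} [Fintype n] [DecidableEq n] [CommRing R]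
    (M : Matrix n n R) : M.transpose.charpoly = M.charpoly := by
  rw [Matrix.charpoly, Matrix.charpoly, ← Matrix.det_transpose]
  congr 1
  ext i j
  simp only [Matrix.transpose_apply, Matrix.charmatrix_apply, Matrix.diagonal_apply,
    Matrix.map_apply, Matrix.transpose_apply]
  rcases eq_or_ne i j with rfl | h
  · rfl
  · simp [h, Ne.symm h]

theorem stmt14 {E F : Type*} [Fintype E] [Fintype F] [DecidableEq E] [DecidableEq F]
    (H : Matrix E F ℝ)
    (hHl : Function.Injective H.mulVec)
    (hHr : Function.Injective H.transpose.mulVec)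
    (P : Matrix E E ℝ) (Q : Matrix F F ℝ) (μ : E → ℝ) (ν : F → ℝ)
    (hP0 : ∀ x y, 0 ≤ P x y) (hP1 : ∀ x, (∑ y, P x y) = 1)
    (hQ0 : ∀ x y, 0 ≤ Q x y) (hQ1 : ∀ x, (∑ y, Q x y) = 1)
    (hμpos : ∀ x, 0 < μ x) (hμ1 : (∑ x, μ x) = 1)
    (hνpos : ∀ y, 0 < ν y) (hν1 : (∑ y, ν y) = 1)
    (hμrev : ∀ x y, μ x * P x y = μ y * P y x)
    (hνrev : ∀ x y, ν x * Q x y = ν y * Q y x)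
    (hdual : P * H = H * Q.transpose) :
    P.charpoly = Q.charpoly := by
  have hdim : Module.finrank ℝ (F → ℝ) = Module.finrank ℝ (E → ℝ) := by
    have h1 : Module.finrank ℝ (F → ℝ) ≤ Module.finrank ℝ (E → ℝ) :=
      LinearMap.finrank_le_finrank_of_injective (f := H.mulVecLin) hHl
    have h2 : Module.finrank ℝ (E → ℝ) ≤ Module.finrank ℝ (F → ℝ) :=
      LinearMap.finrank_le_finrank_of_injective (f := H.transpose.mulVecLin) hHr
    omega
  have hsurj : Function.Surjective H.mulVecLin :=
    (LinearMap.injective_iff_surjective_of_finrank_eq_finrank hdim).mp hHl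
  let e : (F → ℝ) ≃ₗ[ℝ] (E → ℝ) := LinearEquiv.ofBijective H.mulVecLin ⟨hHl, hsurj⟩
  have key : e.conj Q.transpose.mulVecLin = P.mulVecLin := by
    apply LinearMap.ext
    intro x
    obtain ⟨y, rfl⟩ := hsurj x
    have hy : e.symm (H.mulVecLin y) = y := e.symm_apply_apply y
    simp only [LinearEquiv.conj_apply, LinearMap.comp_apply, LinearEquiv.coe_coe]
    rw [show H.mulVecLin y = e y from rfl, e.symm_apply_apply]
    show H.mulVec (Q.transpose.mulVec y) = P.mulVec (H.mulVec y)
    rw [Matrix.mulVec_mulVec, Matrix.mulVec_mulVec, hdual]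
  calc P.charpoly = P.mulVecLin.charpoly := by
        rw [← LinearMap.charpoly_toMatrix P.mulVecLin (Pi.basisFun ℝ E)]
        congr 1
        ext i j
        simp [LinearMap.toMatrix_apply, Matrix.mulVecLin_apply, Matrix.mulVec,
          dotProduct, Pi.basisFun_apply, Pi.single_apply]
    _ = Q.transpose.mulVecLin.charpoly := by rw [← key, LinearEquiv.charpoly_conj]
    _ = Q.transpose.charpoly := by
        rw [← LinearMap.charpoly_toMatrix Q.transpose.mulVecLin (Pi.basisFun ℝ F)]
        congr 1
        ext i j
        simp [LinearMap.toMatrix_apply, Matrix.mulVecLin_apply, Matrix.mulVec,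
          dotProduct, Pi.basisFun_apply, Pi.single_apply]
    _ = Q.charpoly := charpoly_transpose' Q
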